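/- For n×n real matrices A₁, A₂, Q and T > 0, the block matrix exponential identity holds: [I 0] · exp([[A₁, Q],[0, A₂]] T) · [0; I] = ∫₀^T e^{A₁(T−t)} Q e^{A₂ t} dt. -/

import Mathlib

open Matrix MeasureTheory

/-- The matrix exponential `e^{tA}`. -/
noncomputable def mexp {m : Type*} [Fintype m] [DecidableEq m]
    (A : Matrix m m ℝ) (t : ℝ) : Matrix m m ℝ :=
  NormedSpace.exp (t • A)

open NormedSpace Nat

variable {m : Type*} [Fintype m] [DecidableEq m]

noncomputable def entryCLM (M N : Type*) [Fintype M] [Fintype N] (i : M) (j : N) :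
    Matrix M N ℝ →L[ℝ] ℝ :=
  LinearMap.toContinuousLinearMap
    { toFun := fun A => A i j, map_add' := fun _ _ => rfl, map_smul' := fun _ _ => rfl }

lemma exp_summable (x : Matrix m m ℝ) :
    Summable (fun k : ℕ => ((k ! : ℝ))⁻¹ • x ^ k) := by
  letI : SeminormedRing (Matrix m m ℝ) := Matrix.linftyOpSemiNormedRing
  letI : NormedRing (Matrix m m ℝ) := Matrix.linftyOpNormedRing
  letI : NormedAlgebra ℝ (Matrix m m ℝ) := Matrix.linftyOpNormedAlgebra
  exact expSeries_summable' (𝕂 := ℝ) x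

lemma exp_entry_eq (x : Matrix m m ℝ) (i j : m) :
    exp x i j = ∑' k : ℕ, ((k ! : ℝ))⁻¹ • (x ^ k) i j := by
  rw [exp_eq_tsum (𝕂 := ℝ)]
  exact ((entryCLM m m i j).map_tsum (exp_summable x)).trans (by simp [entryCLM]; rfl)

lemma pow_fromBlocks (A B D : Matrix m m ℝ) (k : ℕ) :
    ∃ C, (fromBlocks A B 0 D) ^ k = fromBlocks (A ^ k) C 0 (D ^ k) := by
  induction k with
  | zero => exact ⟨0, by simp [Matrix.fromBlocks_one]⟩
  | succ k ih =>
    obtain ⟨C, hC⟩ := ih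
    refine ⟨A ^ k * B + C * D, ?_⟩
    rw [pow_succ, hC, fromBlocks_multiply]
    simp [pow_succ]

lemma exp_fromBlocks_21 (A B D : Matrix m m ℝ) (i j : m) :
    exp (fromBlocks A B 0 D) (Sum.inr i) (Sum.inl j) = 0 := by
  rw [exp_entry_eq]
  have h : ∀ k : ℕ, ((k ! : ℝ))⁻¹ • (fromBlocks A B 0 D ^ k) (Sum.inr i) (Sum.inl j) = 0 := by
    intro k
    obtain ⟨C, hC⟩ := pow_fromBlocks A B D k
    rw [hC]; simp
  rw [tsum_congr h, tsum_zero]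

lemma exp_fromBlocks_22 (A B D : Matrix m m ℝ) (i j : m) :
    exp (fromBlocks A B 0 D) (Sum.inr i) (Sum.inr j) = exp D i j := by
  rw [exp_entry_eq, exp_entry_eq]
  refine tsum_congr fun k => ?_
  obtain ⟨C, hC⟩ := pow_fromBlocks A B D k
  rw [hC]; simp

lemma hasDerivAt_mexp_entry (M : Matrix m m ℝ) (t : ℝ) (i j : m) :
    HasDerivAt (fun s : ℝ => mexp M s i j) ((M * mexp M t) i j) t := by
  letI : SeminormedRing (Matrix m m ℝ) := Matrix.linftyOpSemiNormedRing
  letI : NormedRing (Matrix m m ℝ) := Matrix.linftyOpNormedRing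
  letI : NormedAlgebra ℝ (Matrix m m ℝ) := Matrix.linftyOpNormedAlgebra
  have h := hasDerivAt_exp_smul_const' (𝕂 := ℝ) M t
  exact (entryCLM m m i j).hasFDerivAt.comp_hasDerivAt t h

lemma continuous_mexp_entry (M : Matrix m m ℝ) (i j : m) :
    Continuous (fun s : ℝ => mexp M s i j) :=
  continuous_iff_continuousAt.mpr fun t => (hasDerivAt_mexp_entry M t i j).continuousAt

lemma exp_comm_self (A : Matrix m m ℝ) (s : ℝ) :
    A * mexp A s = mexp A s * A := by
  letI : SeminormedRing (Matrix m m ℝ) := Matrix.linftyOpSemiNormedRing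
  letI : NormedRing (Matrix m m ℝ) := Matrix.linftyOpNormedRing
  letI : NormedAlgebra ℝ (Matrix m m ℝ) := Matrix.linftyOpNormedAlgebra
  exact (((Commute.refl A).smul_right s).exp_right).eq

lemma smul_fromBlocks' (t : ℝ) (A B D : Matrix m m ℝ) :
    t • fromBlocks A B 0 D = fromBlocks (t • A) (t • B) 0 (t • D) := by
  rw [Matrix.fromBlocks_smul, smul_zero]

lemma mexp_blocks_21 (A₁ A₂ Q : Matrix m m ℝ) (t : ℝ) (i j : m) :
    mexp (fromBlocks A₁ Q 0 A₂) t (Sum.inr i) (Sum.inl j) = 0 := by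
  unfold mexp
  rw [smul_fromBlocks']
  exact exp_fromBlocks_21 _ _ _ i j

lemma mexp_blocks_22 (A₁ A₂ Q : Matrix m m ℝ) (t : ℝ) (i j : m) :
    mexp (fromBlocks A₁ Q 0 A₂) t (Sum.inr i) (Sum.inr j) = mexp A₂ t i j := by
  unfold mexp
  rw [smul_fromBlocks']
  exact exp_fromBlocks_22 _ _ _ i j

lemma mexp_block_decomp (A₁ A₂ Q : Matrix m m ℝ) (t : ℝ) :
    mexp (fromBlocks A₁ Q 0 A₂) t
      = fromBlocks (mexp (fromBlocks A₁ Q 0 A₂) t).toBlocks₁₁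
          (mexp (fromBlocks A₁ Q 0 A₂) t).toBlocks₁₂ 0 (mexp A₂ t) := by
  ext i j
  cases i with
  | inl i =>
    cases j with
    | inl j => rfl
    | inr j => rfl
  | inr i =>
    cases j with
    | inl j => rw [mexp_blocks_21]; rfl
    | inr j => rw [mexp_blocks_22]; rfl

lemma key_deriv (A₁ A₂ Q : Matrix m m ℝ) (T t : ℝ) (i j : m) :
    HasDerivAt
      (fun s => (mexp A₁ (T - s) * (mexp (fromBlocks A₁ Q 0 A₂) s).toBlocks₁₂) i j)
      ((mexp A₁ (T - t) * Q * mexp A₂ t) i j) t := by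
  set M := fromBlocks A₁ Q 0 A₂ with hM
  set E := mexp A₁ (T - t) with hE
  set F := mexp A₂ t with hF
  set Bm := (mexp M t).toBlocks₁₂ with hBm
  have hfun : (fun s => (mexp A₁ (T - s) * (mexp M s).toBlocks₁₂) i j)
      = fun s => ∑ k, mexp A₁ (T - s) i k * mexp M s (Sum.inl k) (Sum.inr j) := by
    funext s
    simp [Matrix.mul_apply, Matrix.toBlocks₁₂]
  rw [hfun]
  have hterm : ∀ k : m, HasDerivAt
      (fun s => mexp A₁ (T - s) i k * mexp M s (Sum.inl k) (Sum.inr j))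
      ((A₁ * mexp A₁ (T - t)) i k * (-1) * mexp M t (Sum.inl k) (Sum.inr j)
        + mexp A₁ (T - t) i k * ((M * mexp M t) (Sum.inl k) (Sum.inr j))) t := by
    intro k
    have h1 : HasDerivAt (fun s : ℝ => mexp A₁ (T - s) i k)
        ((A₁ * mexp A₁ (T - t)) i k * (-1)) t := by
      have hc : HasDerivAt (fun s : ℝ => T - s) (-1) t := by
        simpa using (hasDerivAt_id t).const_sub T
      exact (hasDerivAt_mexp_entry A₁ (T - t) i k).comp t hc
    exact h1.mul (hasDerivAt_mexp_entry M t (Sum.inl k) (Sum.inr j))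
  have hsum := HasDerivAt.fun_sum (fun k (_ : k ∈ Finset.univ) => hterm k)
  refine hsum.congr_deriv (Eq.symm ?_)
  have h12 : M * mexp M t = fromBlocks (A₁ * (mexp M t).toBlocks₁₁) (A₁ * Bm + Q * F) 0 (A₂ * F) := by
    conv_lhs => rw [hM, mexp_block_decomp A₁ A₂ Q t, fromBlocks_multiply]
    simp [hBm, hF, hM]
  have hmat : -(A₁ * E * Bm) + E * (A₁ * Bm + Q * F) = E * Q * F := by
    rw [exp_comm_self A₁ (T - t), ← hE]
    noncomm_ring
  calc (E * Q * F) i j = (-(A₁ * E * Bm) + E * (A₁ * Bm + Q * F)) i j := by rw [hmat]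
    _ = ∑ k, (-((A₁ * E) i k * Bm k j) + E i k * ((A₁ * Bm + Q * F) k j)) := by
        simp [Matrix.mul_apply, Finset.sum_add_distrib, Finset.mul_sum, Finset.sum_mul, mul_assoc]
        rw [Finset.sum_comm]
    _ = ∑ k, ((A₁ * E) i k * (-1) * mexp M t (Sum.inl k) (Sum.inr j)
          + E i k * ((M * mexp M t) (Sum.inl k) (Sum.inr j))) := by
        refine Finset.sum_congr rfl fun k _ => ?_
        have e1 : mexp M t (Sum.inl k) (Sum.inr j) = Bm k j := rfl
        have e2 : (M * mexp M t) (Sum.inl k) (Sum.inr j) = (A₁ * Bm + Q * F) k j := by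
          rw [h12]; rfl
        rw [e1, e2]; ring

theorem block_exp_integral {n : ℕ}
    (A₁ A₂ Q : Matrix (Fin n) (Fin n) ℝ) (T : ℝ) (hT : 0 < T) :
    (mexp (Matrix.fromBlocks A₁ Q 0 A₂) T).toBlocks₁₂
      = Matrix.of fun i j =>
          ∫ t in (0 : ℝ)..T, (mexp A₁ (T - t) * Q * mexp A₂ t) i j := by
  ext i j
  set M := fromBlocks A₁ Q 0 A₂ with hM
  have hderiv : ∀ t ∈ Set.uIcc (0 : ℝ) T, HasDerivAt
      (fun s => (mexp A₁ (T - s) * (mexp M s).toBlocks₁₂) i j)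
      ((mexp A₁ (T - t) * Q * mexp A₂ t) i j) t :=
    fun t _ => key_deriv A₁ A₂ Q T t i j
  have hint : IntervalIntegrable (fun t => (mexp A₁ (T - t) * Q * mexp A₂ t) i j)
      MeasureTheory.volume 0 T := by
    apply Continuous.intervalIntegrable
    simp only [Matrix.mul_apply]
    refine continuous_finset_sum _ fun k _ => Continuous.mul ?_ (continuous_mexp_entry A₂ k j)
    refine continuous_finset_sum _ fun l _ => Continuous.mul ?_ continuous_const
    exact (continuous_mexp_entry A₁ i l).comp (continuous_const.sub continuous_id : Continuous fun s : ℝ => T - s)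
  have hFTC := intervalIntegral.integral_eq_sub_of_hasDerivAt hderiv hint
  rw [Matrix.of_apply, hFTC]
  have h0 : mexp A₁ (T - T) = 1 := by
    unfold mexp
    rw [sub_self, zero_smul, exp_zero]
  have hB0 : ∀ k, (mexp M 0).toBlocks₁₂ k j = 0 := by
    intro k
    have : mexp M 0 = 1 := by unfold mexp; rw [zero_smul, exp_zero]
    rw [Matrix.toBlocks₁₂, Matrix.of_apply, this]
    exact Matrix.one_apply_ne (by simp)
  have e1 : (mexp A₁ (T - T) * (mexp M T).toBlocks₁₂) i j = (mexp M T).toBlocks₁₂ i j := by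
    rw [h0, one_mul]
  have e2 : (mexp A₁ (T - 0) * (mexp M 0).toBlocks₁₂) i j = 0 := by
    rw [Matrix.mul_apply]
    exact Finset.sum_eq_zero fun k _ => by rw [hB0 k, mul_zero]
  rw [e1, e2, sub_zero]
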